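/- Let b : ℤ → ℂ be supported on a discrete interval Q of length 2^s with ∑_x b(x) = 0, and let t > s be an integer. Then for the indicator function χ of the discrete interval [1, 2^t], the convolution χ ∗ b satisfies ‖χ ∗ b‖₁ ≤ 2^{t} · (2·2^s/2^t) · ‖b‖₁, i.e. ‖2^{-t} χ_{[1,2^t]} ∗ b‖₁ ≤ 2^{-t+s+1} ‖b‖₁. -/

import Mathlib

/-- Convolution on ℤ. -/
noncomputable def conv (f g : ℤ → ℂ) (x : ℤ) : ℂ := ∑' j : ℤ, f (x - j) * g j

theorem stmt2 (b : ℤ → ℂ) (a : ℤ) (s t : ℕ) (hts : s < t)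
    (hsupp : Function.support b ⊆ Set.Icc a (a + 2 ^ s - 1))
    (hmean : ∑' x : ℤ, b x = 0) :
    (∑' x : ℤ, ‖((2:ℂ) ^ t)⁻¹ *
        conv (fun y => if y ∈ Set.Icc (1:ℤ) (2 ^ t) then (1:ℂ) else 0) b x‖)
      ≤ (2:ℝ) ^ ((-t : ℤ) + s + 1) * ∑' x : ℤ, ‖b x‖ := by
  set χ : ℤ → ℂ := fun y => if y ∈ Set.Icc (1:ℤ) (2 ^ t) then (1:ℂ) else 0 with hχ
  set F : Finset ℤ := Finset.Icc a (a + 2 ^ s - 1) with hF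
  have hb0 : ∀ j ∉ F, b j = 0 := by
    intro j hj
    by_contra h
    exact hj (Finset.mem_Icc.2 (Set.mem_Icc.1 (hsupp (Function.mem_support.2 h))))
  have hsum0 : ∑ j ∈ F, b j = 0 := by
    rw [← tsum_eq_sum (L := SummationFilter.unconditional ℤ) hb0]; exact hmean
  have hnormsum : (∑' x : ℤ, ‖b x‖) = ∑ j ∈ F, ‖b j‖ := by
    refine tsum_eq_sum ?_
    intro j hj; rw [hb0 j hj, norm_zero]
  have hconv : ∀ x : ℤ, conv χ b x = ∑ j ∈ F, χ (x - j) * b j := by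
    intro x
    refine tsum_eq_sum ?_
    intro j hj; rw [hb0 j hj, mul_zero]
  have h2s : (2:ℤ) ^ s ≤ 2 ^ t := by
    exact_mod_cast Nat.pow_le_pow_right (by norm_num) hts.le
  set S : Finset ℤ := Finset.Icc (a+1) (a + 2^s - 1) ∪
      Finset.Icc (a + 2^t + 1) (a + 2^t + 2^s - 1) with hS
  have hconv0 : ∀ x ∉ S, conv χ b x = 0 := by
    intro x hx
    rw [hconv]
    simp only [hS, Finset.mem_union, Finset.mem_Icc, not_or, not_and_or, not_le] at hx
    obtain ⟨hx1, hx2⟩ := hx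
    by_cases hmid : a + 2^s ≤ x ∧ x ≤ a + 2^t
    · -- middle region: χ(x-j) = 1 for all j ∈ F
      have : ∀ j ∈ F, χ (x - j) * b j = b j := by
        intro j hj
        rw [hF, Finset.mem_Icc] at hj
        have h1 : (1:ℤ) ≤ x - j := by omega
        have h2 : x - j ≤ 2^t := by omega
        rw [hχ]; simp only [Set.mem_Icc]
        rw [if_pos ⟨h1, h2⟩, one_mul]
      rw [Finset.sum_congr rfl this, hsum0]
    · -- outside: every term zero
      push_neg at hmid
      refine Finset.sum_eq_zero ?_
      intro j hj
      rw [hF, Finset.mem_Icc] at hj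
      have : x - j ∉ Set.Icc (1:ℤ) (2^t) := by
        simp only [Set.mem_Icc, not_and_or, not_le]
        omega
      rw [hχ]; simp only [Set.mem_Icc] at this ⊢
      rw [if_neg this, zero_mul]
  have houter : (∑' x : ℤ, ‖((2:ℂ) ^ t)⁻¹ * conv χ b x‖)
      = ∑ x ∈ S, ‖((2:ℂ) ^ t)⁻¹ * conv χ b x‖ := by
    refine tsum_eq_sum ?_
    intro x hx; rw [hconv0 x hx, mul_zero, norm_zero]
  rw [houter, hnormsum]
  -- bound each term
  have hterm : ∀ x : ℤ, ‖((2:ℂ) ^ t)⁻¹ * conv χ b x‖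
      ≤ ((2:ℝ) ^ t)⁻¹ * ∑ j ∈ F, ‖b j‖ := by
    intro x
    rw [norm_mul]
    have h1 : ‖((2:ℂ) ^ t)⁻¹‖ = ((2:ℝ) ^ t)⁻¹ := by
      rw [norm_inv, norm_pow]; norm_num
    rw [h1]
    gcongr
    rw [hconv]
    refine (norm_sum_le _ _).trans ?_
    refine Finset.sum_le_sum ?_
    intro j hj
    rw [norm_mul, hχ]
    by_cases h : x - j ∈ Set.Icc (1:ℤ) (2^t)
    · simp [h]
    · simp [h]
  have hcard : (S.card : ℝ) ≤ 2 ^ (s+1) := by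
    have h1 : S.card ≤ (Finset.Icc (a+1) (a + 2^s - 1)).card +
        (Finset.Icc (a + 2^t + 1) (a + 2^t + 2^s - 1)).card := Finset.card_union_le _ _
    have h2 : (Finset.Icc (a+1) (a + 2^s - 1)).card = ((2:ℤ)^s - 1).toNat := by
      rw [Int.card_Icc]; congr 1; ring
    have h3 : (Finset.Icc (a + 2^t + 1) (a + 2^t + 2^s - 1)).card = ((2:ℤ)^s - 1).toNat := by
      rw [Int.card_Icc]; congr 1; ring
    have h4 : ((2:ℤ)^s - 1).toNat ≤ 2^s := by
      have hc : ((2:ℤ)^s) = ((2^s : ℕ) : ℤ) := by push_cast; ring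
      have hp : (0:ℕ) < 2^s := Nat.pow_pos (by norm_num)
      omega
    have : S.card ≤ 2^(s+1) := by
      rw [h2, h3] at h1
      calc S.card ≤ _ := h1
        _ ≤ 2^s + 2^s := by omega
        _ = 2^(s+1) := by ring
    exact_mod_cast this
  calc ∑ x ∈ S, ‖((2:ℂ) ^ t)⁻¹ * conv χ b x‖
      ≤ ∑ _x ∈ S, ((2:ℝ) ^ t)⁻¹ * ∑ j ∈ F, ‖b j‖ :=
        Finset.sum_le_sum fun x _ => hterm x
    _ = (S.card : ℝ) * (((2:ℝ) ^ t)⁻¹ * ∑ j ∈ F, ‖b j‖) := by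
        rw [Finset.sum_const, nsmul_eq_mul]
    _ ≤ (2:ℝ) ^ (s+1) * (((2:ℝ) ^ t)⁻¹ * ∑ j ∈ F, ‖b j‖) := by
        have hnn : (0:ℝ) ≤ ((2:ℝ) ^ t)⁻¹ * ∑ j ∈ F, ‖b j‖ := by positivity
        exact mul_le_mul_of_nonneg_right hcard hnn
    _ = (2:ℝ) ^ ((-t : ℤ) + s + 1) * ∑ j ∈ F, ‖b j‖ := by
        rw [← mul_assoc]
        congr 1
        rw [show ((-t : ℤ) + s + 1) = (↑(s+1) : ℤ) + (-t) by push_cast; ring,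
          zpow_add₀ (by norm_num : (2:ℝ) ≠ 0), zpow_natCast, zpow_neg, zpow_natCast]
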